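/- Let Γ be a stochastic game which admits an ergodic canonical form: there exist x ∈ ℝ^V and m ∈ ℝ with m^v(x) = m for all v ∈ V. Let α be a stationary strategy of player 1 such that α^v is an optimal maximin strategy in the matrix game A^v(x) for every v (i.e., min_{β̃∈Δ(L^v)} (α^v)ᵀ A^v(x) β̃ = m), and let β be a stationary strategy of player 2 such that β^v is an optimal minimax strategy in A^v(x) for every v (i.e., max_{α̃∈Δ(K^v)} α̃ᵀ A^v(x) β^v = m). Then for every initial position v ∈ V and all stationary strategies α' of player 1 and β' of player 2: g^v(α, β') ≥ m ≥ g^v(α', β); in particular g^v(α, β) = m for all v, so the game is solved in uniformly optimal stationary strategies with value m from every initial position. -/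

import Mathlib

open Filter Matrix Topology

section LiminfAux

lemma liminf_ge_aux (f : ℕ → ℝ) (m C B : ℝ)
    (h : ∀ N : ℕ, m - C / (N + 1) ≤ f N) (hub : ∀ N, f N ≤ B) :
    m ≤ liminf f atTop := by
  have h1 : Tendsto (fun N : ℕ => (N : ℝ) + 1) atTop atTop :=
    tendsto_atTop_add_const_right _ 1 tendsto_natCast_atTop_atTop
  have htend : Tendsto (fun N : ℕ => m - C / (N + 1)) atTop (𝓝 m) := by
    simpa using tendsto_const_nhds.sub (Tendsto.div_atTop tendsto_const_nhds h1)
  have := liminf_le_liminf (f := atTop) (u := fun N : ℕ => m - C / (N + 1)) (v := f)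
    (Eventually.of_forall h) htend.isBoundedUnder_ge
    (isCoboundedUnder_ge_of_le atTop hub)
  rwa [htend.liminf_eq] at this

lemma liminf_le_aux (f : ℕ → ℝ) (m C B : ℝ)
    (h : ∀ N : ℕ, f N ≤ m + C / (N + 1)) (hlb : ∀ N, B ≤ f N) :
    liminf f atTop ≤ m := by
  have h1 : Tendsto (fun N : ℕ => (N : ℝ) + 1) atTop atTop :=
    tendsto_atTop_add_const_right _ 1 tendsto_natCast_atTop_atTop
  have htend : Tendsto (fun N : ℕ => m + C / (N + 1)) atTop (𝓝 m) := by
    simpa using tendsto_const_nhds.add (Tendsto.div_atTop tendsto_const_nhds h1)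
  have := liminf_le_liminf (f := atTop) (u := f) (v := fun N : ℕ => m + C / (N + 1))
    (Eventually.of_forall h) (isBoundedUnder_of ⟨B, fun N => hlb N⟩)
    htend.isBoundedUnder_le.isCoboundedUnder_ge
  rwa [htend.liminf_eq] at this

end LiminfAux

section StochAux

variable {V : Type*} [Fintype V] [DecidableEq V]

lemma pow_entry_nonneg (Q : Matrix V V ℝ) (h0 : ∀ v u, 0 ≤ Q v u) (j : ℕ) :
    ∀ v u, 0 ≤ (Q ^ j) v u := by
  induction j with
  | zero => intro v u; simp only [pow_zero, Matrix.one_apply]; split <;> norm_num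
  | succ j ih =>
    intro v u
    rw [pow_succ, Matrix.mul_apply]
    exact Finset.sum_nonneg fun w _ => mul_nonneg (ih v w) (h0 w u)

lemma pow_row_sum (Q : Matrix V V ℝ) (h1 : ∀ v, ∑ u, Q v u = 1) (j : ℕ) :
    ∀ v, ∑ u, (Q ^ j) v u = 1 := by
  induction j with
  | zero => intro v; simp [Matrix.one_apply]
  | succ j ih =>
    intro v
    simp only [pow_succ, Matrix.mul_apply]
    rw [Finset.sum_comm]
    calc ∑ w, ∑ u, (Q ^ j) v w * Q w u = ∑ w, (Q ^ j) v w * ∑ u, Q w u := by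
          simp [Finset.mul_sum]
      _ = 1 := by simp only [h1, mul_one]; exact ih v

omit [DecidableEq V] in
lemma mulVec_ge_const (A : Matrix V V ℝ) (h0 : ∀ v u, 0 ≤ A v u)
    (h1 : ∀ v, ∑ u, A v u = 1) (y : V → ℝ) (m : ℝ) (hy : ∀ u, m ≤ y u) (v : V) :
    m ≤ A.mulVec y v := by
  have hv : A.mulVec y v = ∑ u, A v u * y u := rfl
  rw [hv]
  calc m = ∑ u, A v u * m := by rw [← Finset.sum_mul, h1, one_mul]
    _ ≤ ∑ u, A v u * y u :=
      Finset.sum_le_sum fun u _ => mul_le_mul_of_nonneg_left (hy u) (h0 v u)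

omit [DecidableEq V] in
lemma mulVec_le_const (A : Matrix V V ℝ) (h0 : ∀ v u, 0 ≤ A v u)
    (h1 : ∀ v, ∑ u, A v u = 1) (y : V → ℝ) (m : ℝ) (hy : ∀ u, y u ≤ m) (v : V) :
    A.mulVec y v ≤ m := by
  have hv : A.mulVec y v = ∑ u, A v u * y u := rfl
  rw [hv]
  calc ∑ u, A v u * y u ≤ ∑ u, A v u * m :=
      Finset.sum_le_sum fun u _ => mul_le_mul_of_nonneg_left (hy u) (h0 v u)
    _ = m := by rw [← Finset.sum_mul, h1, one_mul]

omit [DecidableEq V] in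
lemma mulVec_abs_le (A : Matrix V V ℝ) (h0 : ∀ v u, 0 ≤ A v u)
    (h1 : ∀ v, ∑ u, A v u = 1) (y : V → ℝ) (M : ℝ) (hy : ∀ u, |y u| ≤ M) (v : V) :
    |A.mulVec y v| ≤ M := by
  have hv : A.mulVec y v = ∑ u, A v u * y u := rfl
  rw [hv]
  calc |∑ u, A v u * y u| ≤ ∑ u, |A v u * y u| := Finset.abs_sum_le_sum_abs _ _
    _ ≤ ∑ u, A v u * M := Finset.sum_le_sum fun u _ => by
        rw [abs_mul, abs_of_nonneg (h0 v u)]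
        exact mul_le_mul_of_nonneg_left (hy u) (h0 v u)
    _ = M := by rw [← Finset.sum_mul, h1, one_mul]

end StochAux


/-- The value of a finite zero-sum matrix game:
`Val(A) = max_{α ∈ Δ(K)} min_{β ∈ Δ(L)} αᵀ A β`. -/
noncomputable def matVal {K L : Type*} [Fintype K] [Fintype L]
    (A : Matrix K L ℝ) : ℝ :=
  ⨆ α : stdSimplex ℝ K, ⨅ β : stdSimplex ℝ L, ∑ k, ∑ l, α.1 k * A k l * β.1 l

variable {V : Type*} [Fintype V] [DecidableEq V] [Nonempty V]
  {K L : V → Type*} [∀ v, Fintype (K v)] [∀ v, Nonempty (K v)]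
  [∀ v, Fintype (L v)] [∀ v, Nonempty (L v)]

/-- The potential-transformed local reward matrix `A^v(x)`:
`a^v_{kℓ}(x) = ∑_u p^{vu}_{kℓ} (r^{vu}_{kℓ} + x^v − x^u)`. -/
noncomputable def locMat (p r : ∀ v : V, K v → L v → V → ℝ) (x : V → ℝ) (v : V) :
    Matrix (K v) (L v) ℝ :=
  Matrix.of fun k l => ∑ u, p v k l u * (r v k l u + x v - x u)

/-- The local value `m^v(x) = Val(A^v(x))`. -/
noncomputable def locVal (p r : ∀ v : V, K v → L v → V → ℝ) (x : V → ℝ) (v : V) : ℝ :=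
  matVal (locMat p r x v)

/-- The transition matrix `Q(α,β)` induced by a pair of stationary strategies. -/
noncomputable def Qmat (p : ∀ v : V, K v → L v → V → ℝ)
    (α : ∀ v, K v → ℝ) (β : ∀ v, L v → ℝ) : Matrix V V ℝ :=
  Matrix.of fun v u => ∑ k, ∑ l, α v k * β v l * p v k l u

/-- The expected one-step reward vector `c(α,β)` induced by stationary
strategies. -/
noncomputable def cvec (p r : ∀ v : V, K v → L v → V → ℝ)
    (α : ∀ v, K v → ℝ) (β : ∀ v, L v → ℝ) : V → ℝ :=
  fun v => ∑ k, ∑ l, α v k * β v l * ∑ u, p v k l u * r v k l u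

/-- The limiting average payoff `g^v(α,β)` from initial position `v`. -/
noncomputable def gval (p r : ∀ v : V, K v → L v → V → ℝ)
    (α : ∀ v, K v → ℝ) (β : ∀ v, L v → ℝ) (v : V) : ℝ :=
  liminf (fun N : ℕ => (1 / (N + 1 : ℝ)) * ∑ j ∈ Finset.range (N + 1),
    ((Qmat p α β ^ j).mulVec (cvec p r α β)) v) atTop

lemma Qmat_nonneg (p : ∀ v : V, K v → L v → V → ℝ) (hp0 : ∀ v k l u, 0 ≤ p v k l u)
    (a : ∀ v, K v → ℝ) (b : ∀ v, L v → ℝ)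
    (ha : ∀ v, a v ∈ stdSimplex ℝ (K v)) (hb : ∀ v, b v ∈ stdSimplex ℝ (L v)) :
    ∀ v u, 0 ≤ Qmat p a b v u := fun v u =>
  Finset.sum_nonneg fun k _ => Finset.sum_nonneg fun l _ =>
    mul_nonneg (mul_nonneg ((ha v).1 k) ((hb v).1 l)) (hp0 v k l u)

lemma Qmat_row_sum (p : ∀ v : V, K v → L v → V → ℝ) (hp1 : ∀ v k l, ∑ u, p v k l u = 1)
    (a : ∀ v, K v → ℝ) (b : ∀ v, L v → ℝ)
    (ha : ∀ v, a v ∈ stdSimplex ℝ (K v)) (hb : ∀ v, b v ∈ stdSimplex ℝ (L v)) :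
    ∀ v, ∑ u, Qmat p a b v u = 1 := by
  intro v
  unfold Qmat
  simp only [Matrix.of_apply]
  rw [Finset.sum_comm]
  have : ∀ k, ∑ u, ∑ l, a v k * b v l * p v k l u = a v k := by
    intro k
    rw [Finset.sum_comm]
    have : ∀ l, ∑ u, a v k * b v l * p v k l u = a v k * b v l := by
      intro l; rw [← Finset.mul_sum, hp1, mul_one]
    rw [Finset.sum_congr rfl fun l _ => this l, ← Finset.mul_sum, (hb v).2, mul_one]
  rw [Finset.sum_congr rfl fun k _ => this k, (ha v).2]

/-- Key algebraic identity: the local expected transformed payoff equals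
`c(α,β)_v + x_v − (Q(α,β)x)_v`. -/
lemma payoff_identity (p r : ∀ v : V, K v → L v → V → ℝ)
    (hp1 : ∀ v k l, ∑ u, p v k l u = 1) (x : V → ℝ)
    (a : ∀ v, K v → ℝ) (b : ∀ v, L v → ℝ)
    (ha : ∀ v, ∑ k, a v k = 1) (hb : ∀ v, ∑ l, b v l = 1) (v : V) :
    ∑ k, ∑ l, a v k * locMat p r x v k l * b v l
      = cvec p r a b v + x v - (Qmat p a b).mulVec x v := by
  have hloc : ∀ k l, locMat p r x v k l
      = (∑ u, p v k l u * r v k l u) + x v - ∑ u, p v k l u * x u := by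
    intro k l
    simp only [locMat, Matrix.of_apply]
    have he : ∀ u, p v k l u * (r v k l u + x v - x u)
        = p v k l u * r v k l u + p v k l u * x v - p v k l u * x u := fun u => by ring
    rw [Finset.sum_congr rfl fun u _ => he u, Finset.sum_sub_distrib,
      Finset.sum_add_distrib, ← Finset.sum_mul, hp1]
    ring
  have hQ : (Qmat p a b).mulVec x v
      = ∑ k, ∑ l, a v k * b v l * ∑ u, p v k l u * x u := by
    have hmv : (Qmat p a b).mulVec x v
        = ∑ u, (∑ k, ∑ l, a v k * b v l * p v k l u) * x u := rfl
    rw [hmv]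
    simp only [Finset.sum_mul, Finset.mul_sum]
    rw [Finset.sum_comm]
    refine Finset.sum_congr rfl fun k _ => ?_
    rw [Finset.sum_comm]
    exact Finset.sum_congr rfl fun l _ => Finset.sum_congr rfl fun u _ => by ring
  have h1 : x v = ∑ k, ∑ l, a v k * x v * b v l := by
    have : ∀ k, ∑ l, a v k * x v * b v l = a v k * x v := by
      intro k; rw [← Finset.mul_sum, hb, mul_one]
    rw [Finset.sum_congr rfl fun k _ => this k, ← Finset.sum_mul, ha, one_mul]
  have main : ∑ k, ∑ l, a v k * locMat p r x v k l * b v l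
      = cvec p r a b v + (∑ k, ∑ l, a v k * x v * b v l)
        - (Qmat p a b).mulVec x v := by
    simp only [hloc, hQ, cvec]
    rw [← Finset.sum_add_distrib, ← Finset.sum_sub_distrib]
    refine Finset.sum_congr rfl fun k _ => ?_
    rw [← Finset.sum_add_distrib, ← Finset.sum_sub_distrib]
    exact Finset.sum_congr rfl fun l _ => by ring
  rw [main, ← h1]

/-- If the local transformed payoff of `(a, b)` is at least `m` at every
position, then the limiting average payoff is at least `m`. -/
lemma gval_ge_of_local (p r : ∀ v : V, K v → L v → V → ℝ)
    (hp0 : ∀ v k l u, 0 ≤ p v k l u) (hp1 : ∀ v k l, ∑ u, p v k l u = 1)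
    (a : ∀ v, K v → ℝ) (b : ∀ v, L v → ℝ)
    (ha : ∀ v, a v ∈ stdSimplex ℝ (K v)) (hb : ∀ v, b v ∈ stdSimplex ℝ (L v))
    (x : V → ℝ) (m : ℝ)
    (hd : ∀ w, m ≤ cvec p r a b w + x w - (Qmat p a b).mulVec x w) (v : V) :
    m ≤ gval p r a b v := by
  set Q := Qmat p a b with hQdef
  set c := cvec p r a b with hcdef
  have h0 : ∀ v u, 0 ≤ Q v u := Qmat_nonneg p hp0 a b ha hb
  have h1 : ∀ v, ∑ u, Q v u = 1 := Qmat_row_sum p hp1 a b ha hb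
  have h0j : ∀ j, ∀ v u, 0 ≤ (Q ^ j) v u := fun j => pow_entry_nonneg Q h0 j
  have h1j : ∀ j, ∀ v, ∑ u, (Q ^ j) v u = 1 := fun j => pow_row_sum Q h1 j
  set M : ℝ := ∑ u, |x u| with hMdef
  have hM0 : 0 ≤ M := Finset.sum_nonneg fun u _ => abs_nonneg _
  have hxM : ∀ u, |x u| ≤ M := fun u =>
    Finset.single_le_sum (fun i _ => abs_nonneg (x i)) (Finset.mem_univ u)
  have hQjx : ∀ j w, |(Q ^ j).mulVec x w| ≤ M := fun j w =>
    mulVec_abs_le _ (h0j j) (h1j j) x M hxM w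
  set d : V → ℝ := fun w => c w + x w - Q.mulVec x w with hddef
  have hcd : c = d + (Q.mulVec x - x) := by
    funext w; simp only [Pi.add_apply, Pi.sub_apply, hddef]; ring
  -- bound on c in sup norm
  set Mc : ℝ := ∑ u, |c u| with hMcdef
  have hcM : ∀ u, |c u| ≤ Mc := fun u =>
    Finset.single_le_sum (fun i _ => abs_nonneg (c i)) (Finset.mem_univ u)
  have hQjc : ∀ j w, |(Q ^ j).mulVec c w| ≤ Mc := fun j w =>
    mulVec_abs_le _ (h0j j) (h1j j) c Mc hcM w
  unfold gval
  rw [← hQdef, ← hcdef]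
  apply liminf_ge_aux _ m (2 * M) Mc
  · intro N
    have hpos : (0 : ℝ) < (N : ℝ) + 1 := by positivity
    have hdecomp : ∀ j : ℕ, ((Q ^ j).mulVec c) v
        = ((Q ^ j).mulVec d) v + (((Q ^ (j + 1)).mulVec x) v - ((Q ^ j).mulVec x) v) := by
      intro j
      rw [hcd, Matrix.mulVec_add, Matrix.mulVec_sub]
      have : (Q ^ j).mulVec (Q.mulVec x) = (Q ^ (j + 1)).mulVec x := by
        rw [Matrix.mulVec_mulVec, ← pow_succ]
      simp [this]
    have hsum : ∑ j ∈ Finset.range (N + 1), ((Q ^ j).mulVec c) v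
        = (∑ j ∈ Finset.range (N + 1), ((Q ^ j).mulVec d) v)
          + (((Q ^ (N + 1)).mulVec x) v - x v) := by
      rw [Finset.sum_congr rfl fun j _ => hdecomp j, Finset.sum_add_distrib,
        Finset.sum_range_sub (fun j => ((Q ^ j).mulVec x) v)]
      simp [Matrix.one_mulVec]
    have hdm : ∀ j : ℕ, m ≤ ((Q ^ j).mulVec d) v :=
      fun j => mulVec_ge_const _ (h0j j) (h1j j) d m hd v
    have key : ((N : ℝ) + 1) * m - 2 * M
        ≤ ∑ j ∈ Finset.range (N + 1), ((Q ^ j).mulVec c) v := by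
      rw [hsum]
      have hs1 : ((N : ℝ) + 1) * m ≤ ∑ j ∈ Finset.range (N + 1), ((Q ^ j).mulVec d) v := by
        calc ((N : ℝ) + 1) * m = ∑ _j ∈ Finset.range (N + 1), m := by
              rw [Finset.sum_const, Finset.card_range]; push_cast; ring
          _ ≤ _ := Finset.sum_le_sum fun j _ => hdm j
      have hs2 : -(2 * M) ≤ ((Q ^ (N + 1)).mulVec x) v - x v := by
        have a1 := abs_le.1 (hQjx (N + 1) v)
        have a2 := abs_le.1 (hxM v)
        linarith [a1.1, a2.2]
      linarith
    have heq : m - 2 * M / ((N : ℝ) + 1) = (((N : ℝ) + 1) * m - 2 * M) * (1 / ((N : ℝ) + 1)) := by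
      field_simp
    rw [heq, mul_comm (1 / ((N : ℝ) + 1))]
    exact mul_le_mul_of_nonneg_right key (by positivity)
  · intro N
    have hpos : (0 : ℝ) < (N : ℝ) + 1 := by positivity
    have : ∑ j ∈ Finset.range (N + 1), ((Q ^ j).mulVec c) v ≤ ((N : ℝ) + 1) * Mc := by
      calc ∑ j ∈ Finset.range (N + 1), ((Q ^ j).mulVec c) v
          ≤ ∑ _j ∈ Finset.range (N + 1), Mc :=
            Finset.sum_le_sum fun j _ => (abs_le.1 (hQjc j v)).2
        _ = ((N : ℝ) + 1) * Mc := by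
            rw [Finset.sum_const, Finset.card_range]; push_cast; ring
    calc (1 / ((N : ℝ) + 1)) * ∑ j ∈ Finset.range (N + 1), ((Q ^ j).mulVec c) v
        ≤ (1 / ((N : ℝ) + 1)) * (((N : ℝ) + 1) * Mc) :=
          mul_le_mul_of_nonneg_left this (by positivity)
      _ = Mc := by field_simp

lemma gval_le_of_local (p r : ∀ v : V, K v → L v → V → ℝ)
    (hp0 : ∀ v k l u, 0 ≤ p v k l u) (hp1 : ∀ v k l, ∑ u, p v k l u = 1)
    (a : ∀ v, K v → ℝ) (b : ∀ v, L v → ℝ)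
    (ha : ∀ v, a v ∈ stdSimplex ℝ (K v)) (hb : ∀ v, b v ∈ stdSimplex ℝ (L v))
    (x : V → ℝ) (m : ℝ)
    (hd : ∀ w, cvec p r a b w + x w - (Qmat p a b).mulVec x w ≤ m) (v : V) :
    gval p r a b v ≤ m := by
  set Q := Qmat p a b with hQdef
  set c := cvec p r a b with hcdef
  have h0 : ∀ v u, 0 ≤ Q v u := Qmat_nonneg p hp0 a b ha hb
  have h1 : ∀ v, ∑ u, Q v u = 1 := Qmat_row_sum p hp1 a b ha hb
  have h0j : ∀ j, ∀ v u, 0 ≤ (Q ^ j) v u := fun j => pow_entry_nonneg Q h0 j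
  have h1j : ∀ j, ∀ v, ∑ u, (Q ^ j) v u = 1 := fun j => pow_row_sum Q h1 j
  set M : ℝ := ∑ u, |x u| with hMdef
  have hM0 : 0 ≤ M := Finset.sum_nonneg fun u _ => abs_nonneg _
  have hxM : ∀ u, |x u| ≤ M := fun u =>
    Finset.single_le_sum (fun i _ => abs_nonneg (x i)) (Finset.mem_univ u)
  have hQjx : ∀ j w, |(Q ^ j).mulVec x w| ≤ M := fun j w =>
    mulVec_abs_le _ (h0j j) (h1j j) x M hxM w
  set d : V → ℝ := fun w => c w + x w - Q.mulVec x w with hddef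
  have hcd : c = d + (Q.mulVec x - x) := by
    funext w; simp only [Pi.add_apply, Pi.sub_apply, hddef]; ring
  set Mc : ℝ := ∑ u, |c u| with hMcdef
  have hcM : ∀ u, |c u| ≤ Mc := fun u =>
    Finset.single_le_sum (fun i _ => abs_nonneg (c i)) (Finset.mem_univ u)
  have hQjc : ∀ j w, |(Q ^ j).mulVec c w| ≤ Mc := fun j w =>
    mulVec_abs_le _ (h0j j) (h1j j) c Mc hcM w
  unfold gval
  rw [← hQdef, ← hcdef]
  apply liminf_le_aux _ m (2 * M) (-Mc)
  · intro N
    have hpos : (0 : ℝ) < (N : ℝ) + 1 := by positivity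
    have hdecomp : ∀ j : ℕ, ((Q ^ j).mulVec c) v
        = ((Q ^ j).mulVec d) v + (((Q ^ (j + 1)).mulVec x) v - ((Q ^ j).mulVec x) v) := by
      intro j
      rw [hcd, Matrix.mulVec_add, Matrix.mulVec_sub]
      have : (Q ^ j).mulVec (Q.mulVec x) = (Q ^ (j + 1)).mulVec x := by
        rw [Matrix.mulVec_mulVec, ← pow_succ]
      simp [this]
    have hsum : ∑ j ∈ Finset.range (N + 1), ((Q ^ j).mulVec c) v
        = (∑ j ∈ Finset.range (N + 1), ((Q ^ j).mulVec d) v)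
          + (((Q ^ (N + 1)).mulVec x) v - x v) := by
      rw [Finset.sum_congr rfl fun j _ => hdecomp j, Finset.sum_add_distrib,
        Finset.sum_range_sub (fun j => ((Q ^ j).mulVec x) v)]
      simp [Matrix.one_mulVec]
    have hdm : ∀ j : ℕ, ((Q ^ j).mulVec d) v ≤ m :=
      fun j => mulVec_le_const _ (h0j j) (h1j j) d m hd v
    have key : ∑ j ∈ Finset.range (N + 1), ((Q ^ j).mulVec c) v
        ≤ ((N : ℝ) + 1) * m + 2 * M := by
      rw [hsum]
      have hs1 : ∑ j ∈ Finset.range (N + 1), ((Q ^ j).mulVec d) v ≤ ((N : ℝ) + 1) * m := by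
        calc ∑ j ∈ Finset.range (N + 1), ((Q ^ j).mulVec d) v
            ≤ ∑ _j ∈ Finset.range (N + 1), m := Finset.sum_le_sum fun j _ => hdm j
          _ = ((N : ℝ) + 1) * m := by
              rw [Finset.sum_const, Finset.card_range]; push_cast; ring
      have hs2 : ((Q ^ (N + 1)).mulVec x) v - x v ≤ 2 * M := by
        have a1 := abs_le.1 (hQjx (N + 1) v)
        have a2 := abs_le.1 (hxM v)
        linarith [a1.2, a2.1]
      linarith
    have heq : m + 2 * M / ((N : ℝ) + 1)
        = (((N : ℝ) + 1) * m + 2 * M) * (1 / ((N : ℝ) + 1)) := by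
      field_simp
    rw [heq, mul_comm (1 / ((N : ℝ) + 1))]
    exact mul_le_mul_of_nonneg_right key (by positivity)
  · intro N
    have hpos : (0 : ℝ) < (N : ℝ) + 1 := by positivity
    have : -(((N : ℝ) + 1) * Mc) ≤ ∑ j ∈ Finset.range (N + 1), ((Q ^ j).mulVec c) v := by
      calc -(((N : ℝ) + 1) * Mc) = ∑ _j ∈ Finset.range (N + 1), (-Mc) := by
            rw [Finset.sum_const, Finset.card_range]; push_cast; ring
        _ ≤ _ := Finset.sum_le_sum fun j _ => (abs_le.1 (hQjc j v)).1
    calc (-Mc : ℝ) = (1 / ((N : ℝ) + 1)) * (-(((N : ℝ) + 1) * Mc)) := by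
          field_simp
      _ ≤ (1 / ((N : ℝ) + 1)) * ∑ j ∈ Finset.range (N + 1), ((Q ^ j).mulVec c) v :=
        mul_le_mul_of_nonneg_left this (by positivity)

/-- if a potential `x` brings the game to its ergodic canonical
form (`m^v(x) = m` for all `v`), and `α`, `β` are stationary strategies that
are locally optimal in every transformed matrix game `A^v(x)`, then they are
uniformly optimal: `g^v(α, β') ≥ m ≥ g^v(α', β)` for all stationary `α'`, `β'`
and all `v`; in particular `g^v(α, β) = m` for every initial position `v`. -/
theorem ergodic_canonical_form_solves_game
    (p r : ∀ v : V, K v → L v → V → ℝ)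
    (hp0 : ∀ v k l u, 0 ≤ p v k l u) (hp1 : ∀ v k l, ∑ u, p v k l u = 1)
    (x : V → ℝ) (m : ℝ)
    (hcanon : ∀ v, locVal p r x v = m)
    (α : ∀ v, K v → ℝ) (hα : ∀ v, α v ∈ stdSimplex ℝ (K v))
    (hαopt : ∀ v, ∀ βt ∈ stdSimplex ℝ (L v),
      m ≤ ∑ k, ∑ l, α v k * locMat p r x v k l * βt l)
    (β : ∀ v, L v → ℝ) (hβ : ∀ v, β v ∈ stdSimplex ℝ (L v))
    (hβopt : ∀ v, ∀ αt ∈ stdSimplex ℝ (K v),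
      ∑ k, ∑ l, αt k * locMat p r x v k l * β v l ≤ m) :
    (∀ β' : ∀ v, L v → ℝ, (∀ v, β' v ∈ stdSimplex ℝ (L v)) →
      ∀ v, m ≤ gval p r α β' v) ∧
    (∀ α' : ∀ v, K v → ℝ, (∀ v, α' v ∈ stdSimplex ℝ (K v)) →
      ∀ v, gval p r α' β v ≤ m) ∧
    (∀ v, gval p r α β v = m) := by
  have ha1 : ∀ v, ∑ k, α v k = 1 := fun v => (hα v).2
  have hb1 : ∀ v, ∑ l, β v l = 1 := fun v => (hβ v).2
  have part1 : ∀ β' : ∀ v, L v → ℝ, (∀ v, β' v ∈ stdSimplex ℝ (L v)) →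
      ∀ v, m ≤ gval p r α β' v := by
    intro β' hβ' v
    refine gval_ge_of_local p r hp0 hp1 α β' hα hβ' x m (fun w => ?_) v
    rw [← payoff_identity p r hp1 x α β' ha1 (fun w => (hβ' w).2) w]
    exact hαopt w (β' w) (hβ' w)
  have part2 : ∀ α' : ∀ v, K v → ℝ, (∀ v, α' v ∈ stdSimplex ℝ (K v)) →
      ∀ v, gval p r α' β v ≤ m := by
    intro α' hα' v
    refine gval_le_of_local p r hp0 hp1 α' β hα' hβ x m (fun w => ?_) v
    rw [← payoff_identity p r hp1 x α' β (fun w => (hα' w).2) hb1 w]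
    exact hβopt w (α' w) (hα' w)
  exact ⟨part1, part2, fun v => le_antisymm (part2 α hα v) (part1 β hβ v)⟩
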